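/- (Theorem 4.2, harmonic-product homomorphism.) For all u, v in H⁰ (the ℚ-span of the admissible words), the harmonic product u * v lies in H⁰ and ζ̂(u * v) = ζ̂(u) · ζ̂(v). -/

import Mathlib

/-- `H = ℚ⟨x,y⟩`, modeled as the monoid algebra of the free monoid on two letters
(`false` standing for `x` and `true` standing for `y`). -/
abbrev H : Type := MonoidAlgebra ℚ (FreeMonoid Bool)

/-- The word (monomial) of `H` corresponding to a list of letters. -/
noncomputable def wordAlg (w : List Bool) : H :=
  MonoidAlgebra.of ℚ (FreeMonoid Bool) (FreeMonoid.ofList w)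

/-- The generator `x`. -/
noncomputable def X : H := wordAlg [false]
/-- The generator `y`. -/
noncomputable def Y : H := wordAlg [true]

/-- A word is admissible iff it is empty or begins with `x` and ends with `y`. -/
def IsAdmissibleWord (w : List Bool) : Prop :=
  w = [] ∨ (w.head? = some false ∧ w.getLast? = some true)

/-- `H⁰`, the ℚ-span of the admissible words. -/
noncomputable def H0 : Submodule ℚ H :=
  Submodule.span ℚ {h : H | ∃ w : List Bool, IsAdmissibleWord w ∧ h = wordAlg w}

/-- The multiple zeta value `ζ(k₁,…,k_l) = ∑_{n₁>n₂>⋯>n_l≥1} 1/(n₁^{k₁} ⋯ n_l^{k_l})`. -/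
noncomputable def mzv (k : List ℕ) : ℝ :=
  ∑' n : Fin k.length → ℕ,
    if (∀ i j : Fin k.length, i < j → n j < n i) ∧ (∀ i, 1 ≤ n i) then
      ∏ i : Fin k.length, ((n i : ℝ) ^ k.get i)⁻¹
    else 0

/-- The exponent sequence of a word: `x^{k₁-1}y ⋯ x^{k_l-1}y ↦ (k₁,…,k_l)`. -/
def toSeq : List Bool → List ℕ
  | [] => []
  | false :: r =>
      match toSeq r with
      | [] => []
      | a :: s => (a + 1) :: s
  | true :: r => 1 :: toSeq r

/-- The value of `ζ̂` on a word: `1` on the empty word, `ζ(k₁,…,k_l)` on the admissible word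
`x^{k₁-1}y ⋯ x^{k_l-1}y` (with `k₁ ≥ 2`), and `0` on non-admissible words. -/
noncomputable def zetaWord (w : List Bool) : ℝ :=
  if w = [] then 1
  else if w.head? = some false ∧ w.getLast? = some true then mzv (toSeq w)
  else 0

/-- The ℚ-linear map `ζ̂ : H → ℝ` sending each word to its `zetaWord` value. -/
noncomputable def zhat (f : H) : ℝ :=
  Finsupp.sum f.coeff fun w c => (c : ℝ) * zetaWord (FreeMonoid.toList w)


/-- The word `x^{p-1} y` (i.e. `z_p`), as a list of letters. -/
def zW (p : ℕ) : List Bool := List.replicate (p - 1) false ++ [true]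

open Finset Filter

noncomputable def S : ℕ → List ℕ → ℝ
  | _, [] => 1
  | N, (k :: t) => ∑ n ∈ Finset.Icc 1 N, ((n:ℝ)^k)⁻¹ * S (n-1) t

@[simp] lemma S_nil (N : ℕ) : S N [] = 1 := rfl
@[simp] lemma S_cons (N k : ℕ) (t : List ℕ) :
    S N (k :: t) = ∑ n ∈ Finset.Icc 1 N, ((n:ℝ)^k)⁻¹ * S (n-1) t := rfl

lemma S_nonneg (k : List ℕ) (N : ℕ) : 0 ≤ S N k := by
  induction k generalizing N with
  | nil => simp
  | cons a t ih =>
      simp only [S_cons]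
      exact Finset.sum_nonneg fun n _ => mul_nonneg (by positivity) (ih _)

lemma sum_rpow_le (δ : ℝ) (hδ : 0 < δ) (hδ1 : δ ≤ 1) (N : ℕ) :
    ∑ n ∈ Finset.Icc 1 N, ((n:ℝ)) ^ (δ - 1) ≤ (N:ℝ) ^ δ / δ := by
  induction N with
  | zero => simp [Real.zero_rpow hδ.ne']
  | succ N ih =>
      rw [Finset.sum_Icc_succ_top (by omega)]
      have key : ((N:ℝ)) ^ δ + δ * ((N:ℝ)+1) ^ (δ - 1) ≤ ((N:ℝ)+1) ^ δ := by
        have hN1 : (0:ℝ) < (N:ℝ) + 1 := by positivity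
        have amgm : ((N:ℝ)) ^ δ * ((N:ℝ)+1) ^ (1 - δ) ≤ δ * N + (1-δ) * ((N:ℝ)+1) :=
          Real.geom_mean_le_arith_mean2_weighted hδ.le (by linarith) (Nat.cast_nonneg N)
            hN1.le (by ring)
        have h1 : ((N:ℝ)+1) ^ (1 - δ) * ((N:ℝ)+1) ^ (δ-1) = 1 := by
          rw [← Real.rpow_add hN1]; norm_num
        have h3 : ((N:ℝ)) ^ δ ≤ (δ * N + (1-δ) * ((N:ℝ)+1)) * ((N:ℝ)+1) ^ (δ-1) := by
          calc ((N:ℝ)) ^ δ = ((N:ℝ)) ^ δ * (((N:ℝ)+1) ^ (1 - δ) * ((N:ℝ)+1) ^ (δ-1)) := by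
                rw [h1, mul_one]
            _ = ((N:ℝ)) ^ δ * ((N:ℝ)+1) ^ (1 - δ) * ((N:ℝ)+1) ^ (δ-1) := by ring
            _ ≤ _ := mul_le_mul_of_nonneg_right amgm (Real.rpow_nonneg hN1.le _)
        have h4 : ((N:ℝ)+1) ^ (δ-1) * ((N:ℝ)+1) = ((N:ℝ)+1) ^ δ := by
          nth_rewrite 2 [← Real.rpow_one ((N:ℝ)+1)]
          rw [← Real.rpow_add hN1]; norm_num
        nlinarith [Real.rpow_nonneg hN1.le (δ-1)]
      have hc : ((N+1:ℕ):ℝ) = (N:ℝ) + 1 := by push_cast; ring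
      rw [hc]
      calc ∑ n ∈ Finset.Icc 1 N, ((n:ℝ)) ^ (δ-1) + ((N:ℝ)+1) ^ (δ-1)
          ≤ (N:ℝ) ^ δ / δ + ((N:ℝ)+1) ^ (δ-1) := by linarith
        _ = ((N:ℝ) ^ δ + δ * ((N:ℝ)+1) ^ (δ-1)) / δ := by field_simp
        _ ≤ ((N:ℝ)+1) ^ δ / δ := by
            gcongr

lemma S_le_rpow (t : List ℕ) (ht : ∀ j ∈ t, 1 ≤ j) :
    ∀ δ : ℝ, 0 < δ → δ ≤ 1 → ∃ C, 0 ≤ C ∧ ∀ N : ℕ, S N t ≤ C * ((N:ℝ)+1) ^ δ := by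
  induction t with
  | nil =>
      intro δ hδ hδ1
      refine ⟨1, zero_le_one, fun N => ?_⟩
      rw [S_nil, one_mul]
      calc (1:ℝ) = 1 ^ δ := (Real.one_rpow δ).symm
        _ ≤ ((N:ℝ)+1) ^ δ :=
            Real.rpow_le_rpow zero_le_one (le_add_of_nonneg_left (Nat.cast_nonneg N)) hδ.le
  | cons a t ih =>
      intro δ hδ hδ1
      obtain ⟨C, hC0, hC⟩ := ih (fun j hj => ht j (List.mem_cons_of_mem a hj)) (δ/2)
        (by linarith) (by linarith)
      refine ⟨C * (2/δ), by positivity, fun N => ?_⟩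
      have step : ∀ n ∈ Finset.Icc 1 N, ((n:ℝ)^a)⁻¹ * S (n-1) t ≤ C * (n:ℝ) ^ (δ/2 - 1) := by
        intro n hn
        obtain ⟨hn1, hnN⟩ := Finset.mem_Icc.mp hn
        have hn0 : (0:ℝ) < (n:ℝ) := by exact_mod_cast hn1
        have ha : 1 ≤ a := ht a List.mem_cons_self
        have e1 : ((n:ℝ)^a)⁻¹ ≤ (n:ℝ)⁻¹ := by
          apply inv_anti₀ hn0
          calc (n:ℝ) = (n:ℝ)^1 := (pow_one _).symm
            _ ≤ (n:ℝ)^a := pow_le_pow_right₀ (by exact_mod_cast hn1) ha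
        have e2 : S (n-1) t ≤ C * (n:ℝ) ^ (δ/2) := by
          have := hC (n-1)
          have hc : (((n-1:ℕ)):ℝ) + 1 = (n:ℝ) := by
            have : (1:ℕ) ≤ n := hn1
            push_cast [Nat.cast_sub this]
            ring
          rwa [hc] at this
        calc ((n:ℝ)^a)⁻¹ * S (n-1) t ≤ (n:ℝ)⁻¹ * (C * (n:ℝ) ^ (δ/2)) := by
              apply mul_le_mul e1 e2 (S_nonneg _ _) (by positivity)
          _ = C * ((n:ℝ)⁻¹ * (n:ℝ) ^ (δ/2)) := by ring
          _ = C * (n:ℝ) ^ (δ/2 - 1) := by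
              congr 1
              rw [← Real.rpow_neg_one (n:ℝ), ← Real.rpow_add hn0]
              ring_nf
      calc S N (a :: t) ≤ ∑ n ∈ Finset.Icc 1 N, C * (n:ℝ) ^ (δ/2 - 1) := by
            rw [S_cons]; exact Finset.sum_le_sum step
        _ = C * ∑ n ∈ Finset.Icc 1 N, ((n:ℝ)) ^ (δ/2 - 1) := by rw [Finset.mul_sum]
        _ ≤ C * ((N:ℝ) ^ (δ/2) / (δ/2)) := by
            apply mul_le_mul_of_nonneg_left (sum_rpow_le (δ/2) (by positivity) (by linarith) N) hC0
        _ ≤ C * (2/δ) * ((N:ℝ)+1) ^ δ := by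
            have h1 : (N:ℝ) ^ (δ/2) ≤ ((N:ℝ)+1) ^ δ := by
              calc (N:ℝ) ^ (δ/2) ≤ ((N:ℝ)+1) ^ (δ/2) :=
                    Real.rpow_le_rpow (Nat.cast_nonneg N) (by linarith) (by positivity)
                _ ≤ ((N:ℝ)+1) ^ δ :=
                    Real.rpow_le_rpow_of_exponent_le (by simp [Nat.one_le_cast]) (by linarith)
            calc C * ((N:ℝ) ^ (δ/2) / (δ/2)) = C * (2/δ) * (N:ℝ) ^ (δ/2) := by ring
              _ ≤ C * (2/δ) * ((N:ℝ)+1) ^ δ := by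
                  apply mul_le_mul_of_nonneg_left h1 (by positivity)

lemma S_bddAbove_cons (a : ℕ) (t : List ℕ) (ha : 2 ≤ a) (ht : ∀ j ∈ t, 1 ≤ j) :
    BddAbove (Set.range fun N => S N (a :: t)) := by
  obtain ⟨C, hC0, hC⟩ := S_le_rpow t ht (1/2) (by norm_num) (by norm_num)
  have hsum : Summable (fun n : ℕ => ((n:ℝ)) ^ (-(3/2) : ℝ)) :=
    Real.summable_nat_rpow.2 (by norm_num)
  refine ⟨C * ∑' n : ℕ, ((n:ℝ)) ^ (-(3/2):ℝ), ?_⟩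
  rintro x ⟨N, rfl⟩
  have step : ∀ n ∈ Finset.Icc 1 N, ((n:ℝ)^a)⁻¹ * S (n-1) t ≤ C * (n:ℝ) ^ (-(3/2):ℝ) := by
    intro n hn
    obtain ⟨hn1, hnN⟩ := Finset.mem_Icc.mp hn
    have hn0 : (0:ℝ) < (n:ℝ) := by exact_mod_cast hn1
    have hn1' : (1:ℝ) ≤ (n:ℝ) := by exact_mod_cast hn1
    have e1 : ((n:ℝ)^a)⁻¹ ≤ ((n:ℝ)^2)⁻¹ := by
      apply inv_anti₀ (by positivity)
      exact pow_le_pow_right₀ hn1' ha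
    have e2 : S (n-1) t ≤ C * (n:ℝ) ^ ((1:ℝ)/2) := by
      have := hC (n-1)
      have hc : (((n-1:ℕ)):ℝ) + 1 = (n:ℝ) := by
        push_cast [Nat.cast_sub hn1]; ring
      rwa [hc] at this
    calc ((n:ℝ)^a)⁻¹ * S (n-1) t ≤ ((n:ℝ)^2)⁻¹ * (C * (n:ℝ) ^ ((1:ℝ)/2)) := by
          apply mul_le_mul e1 e2 (S_nonneg _ _) (by positivity)
      _ = C * (((n:ℝ)^2)⁻¹ * (n:ℝ) ^ ((1:ℝ)/2)) := by ring
      _ = C * (n:ℝ) ^ (-(3/2):ℝ) := by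
          congr 1
          rw [show ((n:ℝ)^2)⁻¹ = (n:ℝ) ^ (-2:ℝ) by
            rw [← Real.rpow_natCast (n:ℝ) 2, ← Real.rpow_neg hn0.le]; norm_num]
          rw [← Real.rpow_add hn0]; norm_num
  calc S N (a::t) ≤ ∑ n ∈ Finset.Icc 1 N, C * (n:ℝ) ^ (-(3/2):ℝ) := by
        rw [S_cons]; exact Finset.sum_le_sum step
    _ = C * ∑ n ∈ Finset.Icc 1 N, ((n:ℝ)) ^ (-(3/2):ℝ) := by rw [Finset.mul_sum]
    _ ≤ C * ∑' n : ℕ, ((n:ℝ)) ^ (-(3/2):ℝ) := by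
        apply mul_le_mul_of_nonneg_left
          (Summable.sum_le_tsum _ (fun i _ => Real.rpow_nonneg (Nat.cast_nonneg i) _) hsum) hC0

def AF (l N : ℕ) : Finset (Fin l → ℕ) :=
  (Fintype.piFinset fun _ : Fin l => Finset.range (N+1)).filter
    (fun n => (∀ i j : Fin l, i < j → n j < n i) ∧ (∀ i, 1 ≤ n i))

lemma mem_AF {l N : ℕ} {n : Fin l → ℕ} :
    n ∈ AF l N ↔ (∀ i, n i ≤ N) ∧ (∀ i j : Fin l, i < j → n j < n i) ∧ (∀ i, 1 ≤ n i) := by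
  rw [AF, Finset.mem_filter, Fintype.mem_piFinset]
  simp only [Finset.mem_range, Nat.lt_succ_iff, and_assoc]

lemma S_eq_sum (k : List ℕ) (N : ℕ) :
    S N k = ∑ n ∈ AF k.length N, ∏ i, ((n i : ℝ) ^ k.get i)⁻¹ := by
  induction k generalizing N with
  | nil =>
      show (1:ℝ) = ∑ n ∈ AF 0 N, ∏ i : Fin 0, ((n i : ℝ) ^ List.get [] i)⁻¹
      have hA : AF 0 N = Fintype.piFinset fun _ : Fin 0 => Finset.range (N+1) :=
        Finset.filter_true_of_mem (fun n _ => ⟨fun i => i.elim0, fun i => i.elim0⟩)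
      rw [hA]
      simp [Finset.sum_const, Fintype.card_piFinset]
  | cons a t ih =>
      rw [S_cons]
      have hsum : ∀ n ∈ Finset.Icc 1 N, ((n:ℝ)^a)⁻¹ * S (n-1) t
          = ∑ v ∈ AF t.length (n-1), ((n:ℝ)^a)⁻¹ * ∏ i, ((v i:ℝ) ^ t.get i)⁻¹ := by
        intro n _; rw [ih, Finset.mul_sum]
      rw [Finset.sum_congr rfl hsum, Finset.sum_sigma']
      show _ = ∑ n ∈ AF (t.length+1) N, ∏ i : Fin (t.length+1), ((n i : ℝ) ^ (a::t).get i)⁻¹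
      refine Finset.sum_nbij' (fun x => Fin.cons x.1 x.2) (fun u => ⟨u 0, Fin.tail u⟩)
        ?_ ?_ ?_ ?_ ?_
      · rintro ⟨n, v⟩ hmem
        obtain ⟨hn, hv⟩ := Finset.mem_sigma.mp hmem
        dsimp only at hn hv ⊢
        obtain ⟨hn1, hnN⟩ := Finset.mem_Icc.mp hn
        obtain ⟨hb, hdec, h1⟩ := mem_AF.mp hv
        refine mem_AF.mpr ⟨?_, ?_, ?_⟩
        · intro i
          refine Fin.cases ?_ (fun j => ?_) i
          · simpa using hnN
          · simp only [Fin.cons_succ]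
            exact le_trans (hb j) (by omega)
        · intro i j hij
          refine Fin.cases ?_ (fun j' => fun hij => ?_) j hij
          · intro h; exact absurd h (Fin.not_lt_zero i)
          · refine Fin.cases ?_ (fun i' => ?_) i hij
            · intro _; simp only [Fin.cons_succ, Fin.cons_zero]
              have := hb j'; omega
            · intro h; simp only [Fin.cons_succ]
              exact hdec i' j' (by exact_mod_cast Fin.succ_lt_succ_iff.mp h)
        · intro i
          refine Fin.cases ?_ (fun j => ?_) i
          · simpa using hn1
          · simp only [Fin.cons_succ]; exact h1 j
      · intro u hu
        obtain ⟨hb, hdec, h1⟩ := mem_AF.mp hu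
        refine Finset.mem_sigma.mpr ⟨Finset.mem_Icc.mpr ⟨h1 0, hb 0⟩, mem_AF.mpr ⟨?_, ?_, ?_⟩⟩
        · intro i
          have h2 := hdec 0 i.succ (Fin.succ_pos i)
          have h3 := h1 0
          simp only [Fin.tail]
          omega
        · intro i j hij
          exact hdec i.succ j.succ (Fin.succ_lt_succ_iff.mpr hij)
        · intro i; exact h1 i.succ
      · rintro ⟨n, v⟩ _
        simp [Fin.tail_cons]
      · intro u _
        exact Fin.cons_self_tail u
      · rintro ⟨n, v⟩ _
        dsimp only
        rw [Fin.prod_univ_succ]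
        simp [Fin.cons_zero, Fin.cons_succ, List.get]

lemma S_mono (k : List ℕ) : Monotone fun N => S N k := by
  intro M N h
  dsimp only
  rw [S_eq_sum, S_eq_sum]
  apply Finset.sum_le_sum_of_subset_of_nonneg
  · intro n hn
    rw [mem_AF] at *
    exact ⟨fun i => le_trans (hn.1 i) h, hn.2⟩
  · intros; positivity

lemma S_tendsto (k : List ℕ) (hB : BddAbove (Set.range fun N => S N k)) :
    Filter.Tendsto (fun N => S N k) Filter.atTop (nhds (mzv k)) := by
  set l := k.length with hl
  set F : (Fin l → ℕ) → ℝ := fun n =>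
    if (∀ i j : Fin l, i < j → n j < n i) ∧ (∀ i, 1 ≤ n i) then
      ∏ i, ((n i:ℝ) ^ k.get i)⁻¹ else 0
    with hF
  have hF0 : ∀ n, 0 ≤ F n := by
    intro n; rw [hF]; dsimp only
    split
    · positivity
    · exact le_refl 0
  have key : ∀ N, S N k = ∑ n ∈ AF l N, F n := by
    intro N; rw [S_eq_sum]
    refine Finset.sum_congr rfl fun n hn => ?_
    rw [mem_AF] at hn
    rw [hF]; dsimp only; rw [if_pos ⟨hn.2.1, hn.2.2⟩]
  have hub : ∀ s : Finset (Fin l → ℕ), ∑ n ∈ s, F n ≤ ⨆ N, S N k := by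
    intro s
    set M := s.sup fun n => Finset.univ.sup n with hM
    have hsub : s.filter
        (fun n => (∀ i j : Fin l, i < j → n j < n i) ∧ (∀ i, 1 ≤ n i)) ⊆ AF l M := by
      intro n hn
      rw [Finset.mem_filter] at hn
      rw [mem_AF]
      refine ⟨fun i => ?_, hn.2.1, hn.2.2⟩
      exact le_trans (Finset.le_sup (Finset.mem_univ i)) (Finset.le_sup hn.1)
    calc ∑ n ∈ s, F n
        = ∑ n ∈ s.filter
            (fun n => (∀ i j : Fin l, i < j → n j < n i) ∧ (∀ i, 1 ≤ n i)),
            ∏ i, ((n i:ℝ) ^ k.get i)⁻¹ := (Finset.sum_filter _ _).symm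
      _ ≤ ∑ n ∈ AF l M, ∏ i, ((n i:ℝ) ^ k.get i)⁻¹ := by
          apply Finset.sum_le_sum_of_subset_of_nonneg hsub
          intros; positivity
      _ = S M k := (S_eq_sum k M).symm
      _ ≤ ⨆ N, S N k := le_ciSup hB M
  have hislub : IsLUB (Set.range fun s : Finset (Fin l → ℕ) => ∑ n ∈ s, F n) (⨆ N, S N k) := by
    constructor
    · rintro x ⟨s, rfl⟩; exact hub s
    · intro b hb
      apply ciSup_le
      intro N
      rw [key]
      exact hb ⟨AF l N, rfl⟩
  have hsum : HasSum F (⨆ N, S N k) := hasSum_of_isLUB_of_nonneg _ hF0 hislub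
  have hm : mzv k = ⨆ N, S N k := by
    rw [← hsum.tsum_eq]; rfl
  rw [hm]
  exact tendsto_atTop_ciSup (S_mono k) hB


-- ===================== word combinatorics ==============

def Good (w : List Bool) : Prop := w = [] ∨ w.getLast? = some true

lemma good_of_adm {w : List Bool} (h : IsAdmissibleWord w) : Good w :=
  h.elim Or.inl (fun h => Or.inr h.2)

lemma toSeq_rep_aux (j : ℕ) (w : List Bool) :
    toSeq (List.replicate j false ++ (true :: w)) = (j + 1) :: toSeq w := by
  induction j with
  | zero => simp [toSeq]
  | succ j ih =>
      rw [List.replicate_succ, List.cons_append]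
      rw [show toSeq (false :: (List.replicate j false ++ (true :: w)))
        = match toSeq (List.replicate j false ++ (true :: w)) with
          | [] => [] | a :: s => (a + 1) :: s from rfl, ih]

lemma toSeq_zW_append (p : ℕ) (hp : 1 ≤ p) (w : List Bool) :
    toSeq (zW p ++ w) = p :: toSeq w := by
  rw [zW, List.append_assoc, List.singleton_append, toSeq_rep_aux]
  congr 1
  omega

lemma good_append_zW (p : ℕ) {u : List Bool} (hu : Good u) : Good (zW p ++ u) := by
  right
  rcases hu with rfl | hu
  · rw [List.append_nil, zW, List.getLast?_concat]
  · rw [List.getLast?_append, hu]; rfl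

lemma adm_append_zW (p : ℕ) (hp : 2 ≤ p) {u : List Bool} (hu : Good u) :
    IsAdmissibleWord (zW p ++ u) := by
  right
  constructor
  · rw [zW]
    have : p - 1 = (p - 2) + 1 := by omega
    rw [this, List.replicate_succ]
    rfl
  · exact (good_append_zW p hu).resolve_left (by simp [zW])

lemma good_decomp : ∀ (w : List Bool), Good w → w ≠ [] →
    ∃ p u, 1 ≤ p ∧ Good u ∧ w = zW p ++ u ∧ w.length = p + u.length := by
  intro w
  induction w with
  | nil => intro _ h; exact absurd rfl h
  | cons b r ih =>
      intro hg _
      have hlast : (b :: r).getLast? = some true := by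
        rcases hg with h | h
        · exact absurd h (by simp)
        · exact h
      cases b with
      | true =>
          refine ⟨1, r, le_refl 1, ?_, by simp [zW], by simp [zW]; omega⟩
          rcases r with _ | ⟨c, r'⟩
          · exact Or.inl rfl
          · exact Or.inr (by rw [← hlast]; rfl)
      | false =>
          have hr : r ≠ [] := by
            rintro rfl
            simp at hlast
          have hgr : Good r := by
            rcases r with _ | ⟨c, r'⟩
            · exact absurd rfl hr
            · exact Or.inr (by rw [← hlast]; rfl)
          obtain ⟨p, u, hp, hu, heq, hlen⟩ := ih hgr hr
          refine ⟨p + 1, u, by omega, hu, ?_, ?_⟩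
          · rw [heq, zW, zW]
            have : p + 1 - 1 = (p - 1) + 1 := by omega
            rw [this, List.replicate_succ]
            simp
          · simp only [List.length_cons, hlen]; omega

lemma good_toSeq_pos_aux : ∀ (n : ℕ) (w : List Bool), w.length ≤ n → Good w →
    ∀ j ∈ toSeq w, 1 ≤ j := by
  intro n
  induction n with
  | zero =>
      intro w hw _
      have : w = [] := List.length_eq_zero_iff.mp (by omega)
      subst this
      simp [toSeq]
  | succ m ih =>
      intro w hw hg j hj
      by_cases hne : w = []
      · subst hne; simp [toSeq] at hj
      · obtain ⟨p, u, hp, hu, rfl, hlen⟩ := good_decomp w hg hne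
        rw [toSeq_zW_append p hp] at hj
        rcases List.mem_cons.mp hj with rfl | hj
        · exact hp
        · exact ih u (by omega) hu j hj

lemma good_toSeq_pos {w : List Bool} (hg : Good w) : ∀ j ∈ toSeq w, 1 ≤ j :=
  good_toSeq_pos_aux w.length w le_rfl hg

lemma adm_decomp (w : List Bool) (hw : IsAdmissibleWord w) (hne : w ≠ []) :
    ∃ p u, 2 ≤ p ∧ Good u ∧ w = zW p ++ u := by
  obtain ⟨p, u, hp, hu, heq, _⟩ := good_decomp w (good_of_adm hw) hne
  refine ⟨p, u, ?_, hu, heq⟩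
  rcases hw with rfl | ⟨hhead, _⟩
  · exact absurd rfl hne
  by_contra hlt
  have hp1 : p = 1 := by omega
  subst hp1
  rw [heq] at hhead
  simp [zW] at hhead

-- ===================== algebra lemmas ==============

lemma wordAlg_nil : wordAlg [] = 1 := by
  rw [wordAlg, FreeMonoid.ofList_nil, map_one]

lemma wordAlg_mul (a b : List Bool) : wordAlg a * wordAlg b = wordAlg (a ++ b) := by
  rw [wordAlg, wordAlg, wordAlg, FreeMonoid.ofList_append, map_mul]

noncomputable def evalW (val : List Bool → ℝ) (f : H) : ℝ :=
  Finsupp.sum f.coeff fun w c => (c : ℝ) * val (FreeMonoid.toList w)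

lemma evalW_word (val : List Bool → ℝ) (w : List Bool) : evalW val (wordAlg w) = val w := by
  rw [evalW, wordAlg, MonoidAlgebra.of_apply, MonoidAlgebra.coeff_single]
  rw [Finsupp.sum_single_index (by simp)]
  simp [FreeMonoid.toList_ofList]

lemma evalW_zero (val : List Bool → ℝ) : evalW val 0 = 0 := Finsupp.sum_zero_index

lemma evalW_add (val : List Bool → ℝ) (f g : H) :
    evalW val (f + g) = evalW val f + evalW val g :=
  Finsupp.sum_add_index' (by simp) (by intros; push_cast; ring)

lemma evalW_smul (val : List Bool → ℝ) (q : ℚ) (f : H) :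
    evalW val (q • f) = q * evalW val f := by
  rw [evalW, evalW, MonoidAlgebra.coeff_smul, Finsupp.mul_sum, Finsupp.sum_smul_index (by simp)]
  apply Finsupp.sum_congr
  intro w _
  push_cast
  ring

lemma zhat_eq (f : H) : zhat f = evalW zetaWord f := rfl

noncomputable def SL (N : ℕ) (f : H) : ℝ := evalW (fun w => S N (toSeq w)) f

lemma SL_word (N : ℕ) (w : List Bool) : SL N (wordAlg w) = S N (toSeq w) :=
  evalW_word _ w
lemma SL_zero (N : ℕ) : SL N (0 : H) = 0 := evalW_zero _
lemma SL_add (N : ℕ) (f g : H) : SL N (f + g) = SL N f + SL N g := evalW_add _ f g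
lemma SL_smul (N : ℕ) (q : ℚ) (f : H) : SL N (q • f) = q * SL N f := evalW_smul _ q f

noncomputable def GoodSpan : Submodule ℚ H :=
  Submodule.span ℚ {h : H | ∃ w : List Bool, Good w ∧ h = wordAlg w}

lemma word_mem_goodSpan {w : List Bool} (hw : Good w) : wordAlg w ∈ GoodSpan :=
  Submodule.subset_span ⟨w, hw, rfl⟩

lemma word_mem_H0 {w : List Bool} (hw : IsAdmissibleWord w) : wordAlg w ∈ H0 :=
  Submodule.subset_span ⟨w, hw, rfl⟩

lemma mul_zW_mem (r : ℕ) {g : H} (hg : g ∈ GoodSpan) : wordAlg (zW r) * g ∈ GoodSpan := by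
  induction hg using Submodule.span_induction with
  | mem x hx =>
      obtain ⟨w, hw, rfl⟩ := hx
      rw [wordAlg_mul]
      exact word_mem_goodSpan (good_append_zW r hw)
  | zero => rw [mul_zero]; exact zero_mem _
  | add x y _ _ hx hy => rw [mul_add]; exact add_mem hx hy
  | smul a x _ hx => rw [mul_smul_comm]; exact Submodule.smul_mem _ a hx

lemma mul_zW_mem_H0 (r : ℕ) (hr : 2 ≤ r) {g : H} (hg : g ∈ GoodSpan) :
    wordAlg (zW r) * g ∈ H0 := by
  induction hg using Submodule.span_induction with
  | mem x hx =>
      obtain ⟨w, hw, rfl⟩ := hx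
      rw [wordAlg_mul]
      exact word_mem_H0 (adm_append_zW r hr hw)
  | zero => rw [mul_zero]; exact zero_mem _
  | add x y _ _ hx hy => rw [mul_add]; exact add_mem hx hy
  | smul a x _ hx => rw [mul_smul_comm]; exact Submodule.smul_mem _ a hx

lemma SL_mul_zW (r : ℕ) (hr : 1 ≤ r) {g : H} (hg : g ∈ GoodSpan) (N : ℕ) :
    SL N (wordAlg (zW r) * g) = ∑ n ∈ Finset.Icc 1 N, ((n:ℝ)^r)⁻¹ * SL (n-1) g := by
  induction hg using Submodule.span_induction generalizing N with
  | mem x hx =>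
      obtain ⟨w, hw, rfl⟩ := hx
      rw [wordAlg_mul, SL_word, toSeq_zW_append r hr, S_cons]
      exact Finset.sum_congr rfl fun n _ => by rw [SL_word]
  | zero =>
      rw [mul_zero, SL_zero]
      simp [SL_zero]
  | add x y _ _ hx hy =>
      rw [mul_add, SL_add, hx, hy, ← Finset.sum_add_distrib]
      exact Finset.sum_congr rfl fun n _ => by rw [SL_add]; ring
  | smul a x _ hx =>
      rw [mul_smul_comm, SL_smul, hx, Finset.mul_sum]
      exact Finset.sum_congr rfl fun n _ => by rw [SL_smul]; ring

lemma prod_sum_Icc (F G : ℕ → ℝ) (N : ℕ) :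
    (∑ n ∈ Finset.Icc 1 N, F n) * (∑ n ∈ Finset.Icc 1 N, G n)
      = ∑ n ∈ Finset.Icc 1 N,
          (F n * ∑ m ∈ Finset.Icc 1 (n-1), G m
            + G n * ∑ m ∈ Finset.Icc 1 (n-1), F m
            + F n * G n) := by
  induction N with
  | zero => simp
  | succ N ih =>
      rw [Finset.sum_Icc_succ_top (by omega) F, Finset.sum_Icc_succ_top (by omega) G,
        Finset.sum_Icc_succ_top (by omega)
          (fun n => F n * ∑ m ∈ Finset.Icc 1 (n-1), G m
            + G n * ∑ m ∈ Finset.Icc 1 (n-1), F m + F n * G n)]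
      simp only [Nat.succ_sub_one]
      rw [← ih]
      ring

lemma main_ind (st : H →ₗ[ℚ] H →ₗ[ℚ] H)
    (hone : ∀ w : List Bool, st 1 (wordAlg w) = wordAlg w ∧ st (wordAlg w) 1 = wordAlg w)
    (hrec : ∀ (p q : ℕ), 1 ≤ p → 1 ≤ q → ∀ (w₁ w₂ : List Bool),
      st (wordAlg (zW p ++ w₁)) (wordAlg (zW q ++ w₂)) =
        wordAlg (zW p) * st (wordAlg w₁) (wordAlg (zW q ++ w₂)) +
          wordAlg (zW q) * st (wordAlg (zW p ++ w₁)) (wordAlg w₂) +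
          wordAlg (zW (p + q)) * st (wordAlg w₁) (wordAlg w₂)) :
    ∀ (n : ℕ) (w₁ w₂ : List Bool), Good w₁ → Good w₂ → w₁.length + w₂.length ≤ n →
      st (wordAlg w₁) (wordAlg w₂) ∈ GoodSpan ∧
      ∀ N, SL N (st (wordAlg w₁) (wordAlg w₂)) = S N (toSeq w₁) * S N (toSeq w₂) := by
  have base2 : ∀ w : List Bool, Good w →
      st (wordAlg w) (wordAlg []) ∈ GoodSpan ∧
      ∀ N, SL N (st (wordAlg w) (wordAlg [])) = S N (toSeq w) * S N (toSeq []) := by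
    intro w hw
    rw [wordAlg_nil, (hone w).2]
    refine ⟨word_mem_goodSpan hw, fun N => ?_⟩
    rw [SL_word]
    show _ = _ * S N []
    rw [S_nil, mul_one]
  have base1 : ∀ w : List Bool, Good w →
      st (wordAlg []) (wordAlg w) ∈ GoodSpan ∧
      ∀ N, SL N (st (wordAlg []) (wordAlg w)) = S N (toSeq []) * S N (toSeq w) := by
    intro w hw
    rw [wordAlg_nil, (hone w).1]
    refine ⟨word_mem_goodSpan hw, fun N => ?_⟩
    rw [SL_word]
    show _ = S N [] * _
    rw [S_nil, one_mul]
  intro n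
  induction n with
  | zero =>
      intro w₁ w₂ h1 h2 hlen
      have e1 : w₁ = [] := List.length_eq_zero_iff.mp (by omega)
      subst e1
      exact base1 w₂ h2
  | succ m ih =>
      intro w₁ w₂ hg1 hg2 hlen
      by_cases h2 : w₂ = []
      · subst h2; exact base2 w₁ hg1
      by_cases h1 : w₁ = []
      · subst h1; exact base1 w₂ hg2
      obtain ⟨p, u₁, hp, hu₁, rfl, hl1⟩ := good_decomp w₁ hg1 h1
      obtain ⟨q, u₂, hq, hu₂, rfl, hl2⟩ := good_decomp w₂ hg2 h2
      have hr := hrec p q hp hq u₁ u₂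
      have I1 := ih u₁ (zW q ++ u₂) hu₁ hg2 (by omega)
      have I2 := ih (zW p ++ u₁) u₂ hg1 hu₂ (by omega)
      have I3 := ih u₁ u₂ hu₁ hu₂ (by omega)
      constructor
      · rw [hr]
        exact add_mem (add_mem (mul_zW_mem p I1.1) (mul_zW_mem q I2.1))
          (mul_zW_mem (p+q) I3.1)
      · intro N
        rw [hr, SL_add, SL_add,
          SL_mul_zW p hp I1.1 N, SL_mul_zW q hq I2.1 N,
          SL_mul_zW (p+q) (by omega) I3.1 N,
          toSeq_zW_append p hp, toSeq_zW_append q hq, S_cons, S_cons,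
          prod_sum_Icc (fun n => ((n:ℝ)^p)⁻¹ * S (n-1) (toSeq u₁))
            (fun n => ((n:ℝ)^q)⁻¹ * S (n-1) (toSeq u₂)) N,
          ← Finset.sum_add_distrib, ← Finset.sum_add_distrib]
        apply Finset.sum_congr rfl
        intro n _
        rw [I1.2 (n-1), I2.2 (n-1), I3.2 (n-1),
          toSeq_zW_append q hq, toSeq_zW_append p hp, S_cons, S_cons,
          pow_add, mul_inv]
        ring

lemma zhat_word (w : List Bool) : zhat (wordAlg w) = zetaWord w := evalW_word _ w
lemma zhat_zero : zhat (0 : H) = 0 := evalW_zero _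
lemma zhat_add (f g : H) : zhat (f + g) = zhat f + zhat g := evalW_add _ f g
lemma zhat_smul (q : ℚ) (f : H) : zhat (q • f) = q * zhat f := evalW_smul _ q f

lemma zetaWord_nil : zetaWord [] = 1 := by simp [zetaWord]

lemma zetaWord_adm {w : List Bool} (hw : IsAdmissibleWord w) (hne : w ≠ []) :
    zetaWord w = mzv (toSeq w) := by
  rw [zetaWord, if_neg hne, if_pos (hw.resolve_left hne)]

lemma toSeq_nil : toSeq [] = [] := rfl

lemma SL_tendsto_zhat {f : H} (hf : f ∈ H0) :
    Filter.Tendsto (fun N => SL N f) Filter.atTop (nhds (zhat f)) := by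
  induction hf using Submodule.span_induction with
  | mem x hx =>
      obtain ⟨w, hw, rfl⟩ := hx
      simp only [SL_word, zhat_word]
      by_cases hne : w = []
      · subst hne
        rw [zetaWord_nil, toSeq_nil]
        simp only [S_nil]
        exact tendsto_const_nhds
      · obtain ⟨p, u, hp2, hu, heq⟩ := adm_decomp w hw hne
        rw [zetaWord_adm hw hne, heq, toSeq_zW_append p (by omega)]
        exact S_tendsto _ (S_bddAbove_cons p (toSeq u) hp2 (good_toSeq_pos hu))
  | zero =>
      simp only [SL_zero, zhat_zero]
      exact tendsto_const_nhds
  | add x y _ _ hx hy =>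
      simp only [SL_add, zhat_add]
      exact hx.add hy
  | smul a x _ hx =>
      simp only [SL_smul, zhat_smul]
      exact hx.const_mul _

lemma word_level (st : H →ₗ[ℚ] H →ₗ[ℚ] H)
    (hone : ∀ w : List Bool, st 1 (wordAlg w) = wordAlg w ∧ st (wordAlg w) 1 = wordAlg w)
    (hrec : ∀ (p q : ℕ), 1 ≤ p → 1 ≤ q → ∀ (w₁ w₂ : List Bool),
      st (wordAlg (zW p ++ w₁)) (wordAlg (zW q ++ w₂)) =
        wordAlg (zW p) * st (wordAlg w₁) (wordAlg (zW q ++ w₂)) +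
          wordAlg (zW q) * st (wordAlg (zW p ++ w₁)) (wordAlg w₂) +
          wordAlg (zW (p + q)) * st (wordAlg w₁) (wordAlg w₂))
    (w₁ w₂ : List Bool) (h1 : IsAdmissibleWord w₁) (h2 : IsAdmissibleWord w₂) :
    st (wordAlg w₁) (wordAlg w₂) ∈ H0 ∧
      zhat (st (wordAlg w₁) (wordAlg w₂)) = zetaWord w₁ * zetaWord w₂ := by
  by_cases e2 : w₂ = []
  · subst e2
    rw [wordAlg_nil, (hone w₁).2]
    exact ⟨word_mem_H0 h1, by rw [zhat_word, zetaWord_nil, mul_one]⟩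
  by_cases e1 : w₁ = []
  · subst e1
    rw [wordAlg_nil, (hone w₂).1]
    exact ⟨word_mem_H0 h2, by rw [zhat_word, zetaWord_nil, one_mul]⟩
  obtain ⟨p, u₁, hp, hu₁, heq1⟩ := adm_decomp w₁ h1 e1
  obtain ⟨q, u₂, hq, hu₂, heq2⟩ := adm_decomp w₂ h2 e2
  subst heq1
  subst heq2
  have hg1 : Good (zW p ++ u₁) := good_of_adm h1
  have hg2 : Good (zW q ++ u₂) := good_of_adm h2
  have hmem : st (wordAlg (zW p ++ u₁)) (wordAlg (zW q ++ u₂)) ∈ H0 := by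
    rw [hrec p q (by omega) (by omega) u₁ u₂]
    have I1 := (main_ind st hone hrec (u₁.length + (zW q ++ u₂).length)
      u₁ (zW q ++ u₂) hu₁ hg2 le_rfl).1
    have I2 := (main_ind st hone hrec ((zW p ++ u₁).length + u₂.length)
      (zW p ++ u₁) u₂ hg1 hu₂ le_rfl).1
    have I3 := (main_ind st hone hrec (u₁.length + u₂.length) u₁ u₂ hu₁ hu₂ le_rfl).1
    exact add_mem (add_mem (mul_zW_mem_H0 p hp I1) (mul_zW_mem_H0 q hq I2))
      (mul_zW_mem_H0 (p+q) (by omega) I3)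
  refine ⟨hmem, ?_⟩
  have heqN := (main_ind st hone hrec ((zW p ++ u₁).length + (zW q ++ u₂).length)
    (zW p ++ u₁) (zW q ++ u₂) hg1 hg2 le_rfl).2
  have T1 : Filter.Tendsto (fun N => SL N (st (wordAlg (zW p ++ u₁)) (wordAlg (zW q ++ u₂))))
      Filter.atTop (nhds (zhat (st (wordAlg (zW p ++ u₁)) (wordAlg (zW q ++ u₂))))) :=
    SL_tendsto_zhat hmem
  have hB1 : BddAbove (Set.range fun N => S N (toSeq (zW p ++ u₁))) := by
    rw [toSeq_zW_append p (by omega)]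
    exact S_bddAbove_cons p (toSeq u₁) hp (good_toSeq_pos hu₁)
  have hB2 : BddAbove (Set.range fun N => S N (toSeq (zW q ++ u₂))) := by
    rw [toSeq_zW_append q (by omega)]
    exact S_bddAbove_cons q (toSeq u₂) hq (good_toSeq_pos hu₂)
  have T2 : Filter.Tendsto
      (fun N => S N (toSeq (zW p ++ u₁)) * S N (toSeq (zW q ++ u₂))) Filter.atTop
      (nhds (mzv (toSeq (zW p ++ u₁)) * mzv (toSeq (zW q ++ u₂)))) :=
    (S_tendsto _ hB1).mul (S_tendsto _ hB2)
  have hfe : (fun N => SL N (st (wordAlg (zW p ++ u₁)) (wordAlg (zW q ++ u₂))))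
      = fun N => S N (toSeq (zW p ++ u₁)) * S N (toSeq (zW q ++ u₂)) := funext heqN
  rw [hfe] at T1
  rw [zetaWord_adm h1 e1, zetaWord_adm h2 e2]
  exact tendsto_nhds_unique T1 T2



theorem zhat_harmonic_hom' (st : H →ₗ[ℚ] H →ₗ[ℚ] H)
    (hone : ∀ w : List Bool, st 1 (wordAlg w) = wordAlg w ∧ st (wordAlg w) 1 = wordAlg w)
    (hrec : ∀ (p q : ℕ), 1 ≤ p → 1 ≤ q → ∀ (w₁ w₂ : List Bool),
      st (wordAlg (zW p ++ w₁)) (wordAlg (zW q ++ w₂)) =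
        wordAlg (zW p) * st (wordAlg w₁) (wordAlg (zW q ++ w₂)) +
          wordAlg (zW q) * st (wordAlg (zW p ++ w₁)) (wordAlg w₂) +
          wordAlg (zW (p + q)) * st (wordAlg w₁) (wordAlg w₂))
    (u v : H) (hu : u ∈ H0) (hv : v ∈ H0) :
    st u v ∈ H0 ∧ zhat (st u v) = zhat u * zhat v := by
  induction hu using Submodule.span_induction with
  | mem x hx =>
      obtain ⟨w₁, hw₁, rfl⟩ := hx
      induction hv using Submodule.span_induction with
      | mem y hy =>
          obtain ⟨w₂, hw₂, rfl⟩ := hy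
          have := word_level st hone hrec w₁ w₂ hw₁ hw₂
          rwa [← zhat_word w₁, ← zhat_word w₂] at this
      | zero =>
          rw [map_zero]
          exact ⟨zero_mem _, by rw [zhat_zero, mul_zero]⟩
      | add y z hy' hz' hy hz =>
          rw [map_add]
          exact ⟨add_mem hy.1 hz.1, by rw [zhat_add, zhat_add, hy.2, hz.2]; ring⟩
      | smul a y hy' hy =>
          rw [map_smul]
          exact ⟨Submodule.smul_mem _ a hy.1, by rw [zhat_smul, zhat_smul, hy.2]; ring⟩
  | zero =>
      rw [map_zero, LinearMap.zero_apply]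
      exact ⟨zero_mem _, by rw [zhat_zero, zero_mul]⟩
  | add x y hx' hy' hx hy =>
      rw [map_add, LinearMap.add_apply]
      exact ⟨add_mem hx.1 hy.1, by rw [zhat_add, zhat_add, hx.2, hy.2]; ring⟩
  | smul a x hx' hx =>
      rw [map_smul, LinearMap.smul_apply]
      exact ⟨Submodule.smul_mem _ a hx.1, by rw [zhat_smul, zhat_smul, hx.2]; ring⟩

/-- **Theorem 4.2 (harmonic-product homomorphism).**  Let `*` be the (unique) ℚ-bilinear
harmonic product on `H`, i.e. `1 * w = w * 1 = w` for each word `w`,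
`x^p * w = w * x^p = w x^p` for `p ≥ 1`, and
`(x^{p-1}y w₁) * (x^{q-1}y w₂)
  = x^{p-1}y (w₁ * x^{q-1}y w₂) + x^{q-1}y (x^{p-1}y w₁ * w₂) + x^{p+q-1}y (w₁ * w₂)`
for `p, q ≥ 1` and words `w₁, w₂`.
Then for all `u, v ∈ H⁰`, `u * v ∈ H⁰` and `ζ̂(u * v) = ζ̂(u)·ζ̂(v)`. -/
theorem zhat_harmonic_hom (st : H →ₗ[ℚ] H →ₗ[ℚ] H)
    (hone : ∀ w : List Bool, st 1 (wordAlg w) = wordAlg w ∧ st (wordAlg w) 1 = wordAlg w)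
    (hx : ∀ (p : ℕ), 1 ≤ p → ∀ w : List Bool,
      st (wordAlg (List.replicate p false)) (wordAlg w) =
          wordAlg (w ++ List.replicate p false) ∧
        st (wordAlg w) (wordAlg (List.replicate p false)) =
          wordAlg (w ++ List.replicate p false))
    (hrec : ∀ (p q : ℕ), 1 ≤ p → 1 ≤ q → ∀ (w₁ w₂ : List Bool),
      st (wordAlg (zW p ++ w₁)) (wordAlg (zW q ++ w₂)) =
        wordAlg (zW p) * st (wordAlg w₁) (wordAlg (zW q ++ w₂)) +
          wordAlg (zW q) * st (wordAlg (zW p ++ w₁)) (wordAlg w₂) +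
          wordAlg (zW (p + q)) * st (wordAlg w₁) (wordAlg w₂))
    (u v : H) (hu : u ∈ H0) (hv : v ∈ H0) :
    st u v ∈ H0 ∧ zhat (st u v) = zhat u * zhat v := by
  exact zhat_harmonic_hom' st hone hrec u v hu hv
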